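/- Let n ≥ 3 and let w ∈ Área_n. (i) If ℓ(w·t) > ℓ(w) and w·t ∈ Área_n, then s_1 ∈ Des(w) and Des(w·t) = (Des(w) ∪ {t}) \ {s_1}. (ii) For 1 ≤ i ≤ n−2, if ℓ(w·s_i) > ℓ(w) and w·s_i ∈ Área_n, then s_{i+1} ∈ Des(w); moreover under these hypotheses Des(w·s_1) = (Des(w) ∪ {s_1}) \ {t, s_2}, and for 2 ≤ i ≤ n−2, Des(w·s_i) = (Des(w) ∪ {s_i}) \ {s_{i+1}}. (iii) If ℓ(w·s_{n−1}) > ℓ(w) and w·s_{n−1} ∈ Área_n, then Des(w·s_{n−1}) = Des(w) ∪ {s_{n−1}}. -/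

import Mathlib

namespace BnPaper

/-- The generator `t`: swaps `1` and `-1`, fixing all other points. -/
def t : Equiv.Perm ℤ := Equiv.swap 1 (-1)

/-- The generator `s i`: swaps `i ↔ i+1` and `-i ↔ -(i+1)`. -/
def s (i : ℤ) : Equiv.Perm ℤ := Equiv.swap i (i + 1) * Equiv.swap (-i) (-(i + 1))

/-- The descending product `s_j · s_{j-1} ⋯ s_i` (the identity when `i > j`). -/
def desc (i j : ℕ) : Equiv.Perm ℤ :=
  ((List.range (j + 1 - i)).map (fun k => s ((j : ℤ) - (k : ℤ)))).prod

/-- The ascending product `s_i · s_{i+1} ⋯ s_j` (the identity when `i > j`). -/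
def asc (i j : ℕ) : Equiv.Perm ℤ :=
  ((List.range (j + 1 - i)).map (fun k => s ((i : ℤ) + (k : ℤ)))).prod

/-- `t_j = s_{j-1} ⋯ s_1 · t · s_1 ⋯ s_{j-1}`. -/
def tt (j : ℕ) : Equiv.Perm ℤ := desc 1 (j - 1) * t * (desc 1 (j - 1))⁻¹

/-- The Coxeter generating set `{t, s_1, …, s_{n-1}}` of `W_n`. -/
def gens (n : ℕ) : Set (Equiv.Perm ℤ) :=
  insert t {g | ∃ i : ℕ, 1 ≤ i ∧ i ≤ n - 1 ∧ g = s (i : ℤ)}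

/-- The Coxeter length: the least number of generators whose product is `w`. -/
noncomputable def len (n : ℕ) (w : Equiv.Perm ℤ) : ℕ :=
  sInf {k | ∃ l : List (Equiv.Perm ℤ), l.length = k ∧ (∀ g ∈ l, g ∈ gens n) ∧ l.prod = w}

/-- `W_n` realised as the signed permutations of `{-n, …, -1, 1, …, n}`:
permutations of `ℤ` that are odd (`w(-i) = -w(i)`) and fix everything beyond `n` in
absolute value. -/
def W (n : ℕ) : Set (Equiv.Perm ℤ) :=
  {w | (∀ i : ℤ, w (-i) = -(w i)) ∧ ∀ i : ℤ, (n : ℤ) < |i| → w i = i}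

/-- The right descent set `Des(w)`. -/
def Des (n : ℕ) (w : Equiv.Perm ℤ) : Set (Equiv.Perm ℤ) :=
  {g | g ∈ gens n ∧ len n (w * g) < len n w}

/-- The enhanced descent-set invariant
`ρ_m(w) = Des(w) ∪ {t_j : 2 ≤ j ≤ m, ℓ(w t_j) < ℓ(w)}`. -/
def rho (n m : ℕ) (w : Equiv.Perm ℤ) : Set (Equiv.Perm ℤ) :=
  Des n w ∪ {g | ∃ j : ℕ, 2 ≤ j ∧ j ≤ m ∧ g = tt j ∧ len n (w * tt j) < len n w}

/-- `Área_n`: the negative entries of the row form appear in increasing order and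
the positive entries in strictly decreasing order. -/
def Area (n : ℕ) : Set (Equiv.Perm ℤ) :=
  {w | w ∈ W n ∧ ∀ i j : ℤ, 1 ≤ i → i < j → j ≤ (n : ℤ) →
    (w i < 0 → w j < 0 → w i < w j) ∧ (0 < w i → 0 < w j → w j < w i)}

/-- The suffix relation `y ≤_e w`: `w = z · y` with `ℓ(w) = ℓ(z) + ℓ(y)`. -/
def Suf (n : ℕ) (y w : Equiv.Perm ℤ) : Prop :=
  ∃ z, z ∈ W n ∧ w = z * y ∧ len n w = len n z + len n y

/-- `a_q = (t)(s_1 t)(s_2 s_1 t) ⋯ (s_{q-1} ⋯ s_1 t)`. -/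
def aw (q : ℕ) : Equiv.Perm ℤ := ((List.range q).map (fun k => desc 1 k * t)).prod

/-- `b_q = (s_{q+1})(s_{q+2} s_{q+1}) ⋯ (s_{n-1} ⋯ s_{q+1})` (identity for `q ≥ n-1`). -/
def bw (n q : ℕ) : Equiv.Perm ℤ :=
  ((List.range (n - 1 - q)).map (fun k => desc (q + 1) (q + 1 + k))).prod

/-- `σ_{n,q} = a_q · b_q`. -/
def sig (n q : ℕ) : Equiv.Perm ℤ := aw q * bw n q

/-- `p_{n,q} = (s_{n-q} ⋯ s_1)(s_{n-q+1} ⋯ s_2) ⋯ (s_{n-1} ⋯ s_q)`,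
with `p_{n,0} = p_{n,n} = e`. -/
def p (n q : ℕ) : Equiv.Perm ℤ :=
  ((List.range q).map (fun m => desc (1 + m) (n - q + m))).prod

/-- `Π_{n,q} = (s_{n-q-1} ⋯ s_1) · t · p_{n,q}`. -/
def PiElt (n q : ℕ) : Equiv.Perm ℤ := desc 1 (n - q - 1) * t * p n q

/-- `Υ(w) = {z ∈ Área_n : Des(z) = Des(w)}`. -/
def Ups (n : ℕ) (w : Equiv.Perm ℤ) : Set (Equiv.Perm ℤ) :=
  {z | z ∈ Area n ∧ Des n z = Des n w}

/-- The parabolic subgroup `W_J = ⟨s_1, …, s_{n-1}⟩`. -/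
def WJ (n : ℕ) : Set (Equiv.Perm ℤ) :=
  ↑(Subgroup.closure {g | ∃ i : ℕ, 1 ≤ i ∧ i ≤ n - 1 ∧ g = s (i : ℤ)})

/-- The parabolic subgroup `W_K = ⟨t, s_1, …, s_{n-2}⟩`. -/
def WK (n : ℕ) : Set (Equiv.Perm ℤ) :=
  ↑(Subgroup.closure (insert t {g | ∃ i : ℕ, 1 ≤ i ∧ i ≤ n - 2 ∧ g = s (i : ℤ)}))

/-- Knuth relation of type `I_k` : `w' = w · s_{i+1}` when
`w(i+1) < w(i) < w(i+2)` or `w(i+2) < w(i) < w(i+1)`. -/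
def stepI (k : ℕ) (w w' : Equiv.Perm ℤ) : Prop :=
  ∃ i : ℤ, 1 ≤ i ∧ i ≤ (k : ℤ) - 2 ∧
    ((w (i + 1) < w i ∧ w i < w (i + 2)) ∨ (w (i + 2) < w i ∧ w i < w (i + 1))) ∧
    w' = w * s (i + 1)

/-- Knuth relation of type `II_k` : `w' = w · s_i` when
`w(i+1) < w(i+2) < w(i)` or `w(i) < w(i+2) < w(i+1)`. -/
def stepII (k : ℕ) (w w' : Equiv.Perm ℤ) : Prop :=
  ∃ i : ℤ, 1 ≤ i ∧ i ≤ (k : ℤ) - 2 ∧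
    ((w (i + 1) < w (i + 2) ∧ w (i + 2) < w i) ∨ (w i < w (i + 2) ∧ w (i + 2) < w (i + 1))) ∧
    w' = w * s i

/-- Knuth relation of type `III_k` : `w' = w · s_i` when `w(i)` and `w(i+1)` have
opposite signs. -/
def stepIII (k : ℕ) (w w' : Equiv.Perm ℤ) : Prop :=
  ∃ i : ℤ, 1 ≤ i ∧ i ≤ (k : ℤ) - 1 ∧
    ((w i < 0 ∧ 0 < w (i + 1)) ∨ (w (i + 1) < 0 ∧ 0 < w i)) ∧
    w' = w * s i


lemma t_apply (j : ℤ) : t j = if j = 1 then -1 else if j = -1 then 1 else j := by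
  simp [t, Equiv.swap_apply_def]

lemma s_apply {i : ℤ} (hi : 1 ≤ i) (j : ℤ) :
    s i j = if j = i then i + 1 else if j = i + 1 then i else if j = -i then -(i+1)
      else if j = -(i+1) then -i else j := by
  simp only [s, Equiv.Perm.mul_apply, Equiv.swap_apply_def]
  split_ifs <;> omega

lemma t_t : t * t = 1 := by
  simp [t, Equiv.swap_mul_self]

lemma t_invol0 : True := trivial

lemma s_s {i : ℤ} (hi : 1 ≤ i) : s i * s i = 1 := by
  ext j
  have h1 := s_apply hi j
  have h2 := s_apply hi (s i j)
  simp only [Equiv.Perm.mul_apply, Equiv.Perm.one_apply]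
  rw [h2, h1]
  split_ifs <;> omega

lemma t_ne_s {a : ℤ} (ha : 1 ≤ a) : t ≠ s a := by
  intro h
  have h1 : t (a+1) = s a (a+1) := by rw [h]
  rw [t_apply, s_apply ha] at h1
  split_ifs at h1 <;> omega

lemma s_ne_s {a b : ℤ} (ha : 1 ≤ a) (hb : 1 ≤ b) (hab : a ≠ b) : s a ≠ s b := by
  intro h
  have h1 : s a a = s b a := by rw [h]
  rw [s_apply ha, s_apply hb] at h1
  split_ifs at h1 <;> omega

-- W basic lemmas
lemma one_mem_W (n : ℕ) : (1 : Equiv.Perm ℤ) ∈ W n := ⟨fun i => rfl, fun i _ => rfl⟩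

lemma W_mul {n : ℕ} {u v : Equiv.Perm ℤ} (hu : u ∈ W n) (hv : v ∈ W n) : u * v ∈ W n := by
  refine ⟨fun i => ?_, fun i hi => ?_⟩
  · simp only [Equiv.Perm.mul_apply, hv.1, hu.1]
  · simp only [Equiv.Perm.mul_apply, hv.2 i hi, hu.2 i hi]

lemma t_mem_W {n : ℕ} (hn : 1 ≤ n) : t ∈ W n := by
  constructor
  · intro i
    rw [t_apply, t_apply]
    split_ifs <;> omega
  · intro i hi
    rw [lt_abs] at hi
    rw [t_apply]
    split_ifs <;> omega

lemma s_mem_W {n : ℕ} {i : ℤ} (hi : 1 ≤ i) (hin : i + 1 ≤ (n : ℤ)) : s i ∈ W n := by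
  constructor
  · intro j
    rw [s_apply hi, s_apply hi]
    split_ifs <;> omega
  · intro j hj
    rw [lt_abs] at hj
    rw [s_apply hi]
    split_ifs <;> omega

lemma gen_mem_W {n : ℕ} (hn : 1 ≤ n) {g : Equiv.Perm ℤ} (hg : g ∈ gens n) : g ∈ W n := by
  rcases hg with h | ⟨i, hi1, hi2, rfl⟩
  · exact h ▸ t_mem_W hn
  · exact s_mem_W (by exact_mod_cast hi1) (by push_cast; omega)

lemma W_zero (n : ℕ) {w : Equiv.Perm ℤ} (hw : w ∈ W n) : w 0 = 0 := by
  have := hw.1 0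
  simp at this
  omega

lemma W_window {n : ℕ} {w : Equiv.Perm ℤ} (hw : w ∈ W n) {i : ℤ} (hi : |i| ≤ n) :
    |w i| ≤ n := by
  by_contra h
  push_neg at h
  have h2 : w (w i) = w i := hw.2 (w i) h
  have h3 := w.injective h2
  rw [abs_le] at hi
  rw [lt_abs] at h
  omega

lemma W_ne_zero {n : ℕ} {w : Equiv.Perm ℤ} (hw : w ∈ W n) {i : ℤ} (hi : i ≠ 0) :
    w i ≠ 0 := by
  intro h
  exact hi (w.injective (h.trans (W_zero n hw).symm))

-- value computations
lemma mulT_one {n : ℕ} {w : Equiv.Perm ℤ} (hw : w ∈ W n) : (w * t) 1 = -(w 1) := by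
  have : t 1 = -1 := by rw [t_apply]; norm_num
  rw [Equiv.Perm.mul_apply, this, hw.1 1]

lemma mulT_other {w : Equiv.Perm ℤ} {j : ℤ} (h1 : j ≠ 1) (h2 : j ≠ -1) :
    (w * t) j = w j := by
  rw [Equiv.Perm.mul_apply, t_apply]
  split_ifs <;> tauto

lemma mulS_fst {w : Equiv.Perm ℤ} {i : ℤ} (hi : 1 ≤ i) : (w * s i) i = w (i + 1) := by
  rw [Equiv.Perm.mul_apply, s_apply hi]
  split_ifs <;> omega

lemma mulS_snd {w : Equiv.Perm ℤ} {i : ℤ} (hi : 1 ≤ i) : (w * s i) (i + 1) = w i := by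
  rw [Equiv.Perm.mul_apply, s_apply hi]
  split_ifs with h1 h2 <;> first | rfl | omega

lemma mulS_other {w : Equiv.Perm ℤ} {i j : ℤ} (hi : 1 ≤ i) (h1 : j ≠ i) (h2 : j ≠ i + 1)
    (h3 : j ≠ -i) (h4 : j ≠ -(i+1)) : (w * s i) j = w j := by
  rw [Equiv.Perm.mul_apply, s_apply hi]
  split_ifs <;> tauto


-- inversion statistics
noncomputable def PosSet (n : ℕ) : Finset ℤ := (Finset.Icc (-(n:ℤ)) n).erase 0

noncomputable def invSet (n : ℕ) (w : Equiv.Perm ℤ) : Finset (ℤ × ℤ) :=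
  ((PosSet n) ×ˢ (PosSet n)).filter (fun p => p.1 < p.2 ∧ w p.2 < w p.1)

noncomputable def Neg (n : ℕ) (w : Equiv.Perm ℤ) : ℕ :=
  ((Finset.Icc (1:ℤ) n).filter (fun i => w i < 0)).card

noncomputable def DD (n : ℕ) (w : Equiv.Perm ℤ) : ℕ := (invSet n w).card + Neg n w

lemma mem_PosSet {n : ℕ} {j : ℤ} : j ∈ PosSet n ↔ j ≠ 0 ∧ -(n:ℤ) ≤ j ∧ j ≤ n := by
  simp [PosSet, Finset.mem_erase, Finset.mem_Icc, and_assoc]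

lemma mem_invSet {n : ℕ} {w : Equiv.Perm ℤ} {a b : ℤ} :
    (a, b) ∈ invSet n w ↔ (a ∈ PosSet n ∧ b ∈ PosSet n) ∧ a < b ∧ w b < w a := by
  simp [invSet, Finset.mem_filter, Finset.mem_product]

lemma t_invol (j : ℤ) : t (t j) = j := Equiv.swap_apply_self 1 (-1) j

lemma s_invol {i : ℤ} (hi : 1 ≤ i) (j : ℤ) : s i (s i j) = j := by
  rw [s_apply hi, s_apply hi]
  split_ifs <;> omega

lemma t_maps_PosSet {n : ℕ} {j : ℤ} (hn : 1 ≤ n) (hj : j ∈ PosSet n) : t j ∈ PosSet n := by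
  rw [mem_PosSet] at *
  rw [t_apply]
  split_ifs <;> omega

lemma s_maps_PosSet {n : ℕ} {i j : ℤ} (hi : 1 ≤ i) (hin : i + 1 ≤ (n:ℤ))
    (hj : j ∈ PosSet n) : s i j ∈ PosSet n := by
  rw [mem_PosSet] at *
  rw [s_apply hi]
  split_ifs <;> omega

lemma t_order {a b : ℤ} (ha : a ≠ 0) (hb : b ≠ 0) (hab : a < b)
    (hne : ¬(a = -1 ∧ b = 1)) : t a < t b := by
  rw [t_apply, t_apply]
  split_ifs <;> omega

lemma s_order {i a b : ℤ} (hi : 1 ≤ i) (hab : a < b)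
    (hne1 : ¬(a = i ∧ b = i + 1)) (hne2 : ¬(a = -(i+1) ∧ b = -i)) : s i a < s i b := by
  rw [s_apply hi, s_apply hi]
  split_ifs <;> omega

lemma invT_card {n : ℕ} {w : Equiv.Perm ℤ} (hn : 1 ≤ n) (hw : w ∈ W n) (ha : 0 < w 1) :
    (invSet n (w * t)).card = (invSet n w).card + 1 := by
  have ht1 : t 1 = -1 := by rw [t_apply]; norm_num
  have htm1 : t (-1) = 1 := by rw [t_apply]; norm_num
  have hmem : ((-1 : ℤ), (1 : ℤ)) ∈ invSet n (w * t) := by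
    rw [mem_invSet]
    refine ⟨⟨?_, ?_⟩, by norm_num, ?_⟩
    · rw [mem_PosSet]; omega
    · rw [mem_PosSet]; omega
    · simp only [Equiv.Perm.mul_apply, ht1, htm1, hw.1 1]
      omega
  have himg : invSet n (w * t) =
      insert ((-1 : ℤ), (1 : ℤ)) ((invSet n w).image (fun p => (t p.1, t p.2))) := by
    ext ⟨a, b⟩
    simp only [Finset.mem_insert, Finset.mem_image, Prod.mk.injEq, Prod.exists]
    constructor
    · intro hab
      rw [mem_invSet] at hab
      obtain ⟨⟨haP, hbP⟩, hlt, hinv⟩ := hab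
      by_cases hc : a = -1 ∧ b = 1
      · exact Or.inl ⟨hc.1, hc.2⟩
      · right
        refine ⟨t a, t b, ?_, ?_, ?_⟩
        · rw [mem_invSet]
          refine ⟨⟨t_maps_PosSet hn haP, t_maps_PosSet hn hbP⟩, ?_, ?_⟩
          · exact t_order (mem_PosSet.mp haP).1 (mem_PosSet.mp hbP).1 hlt hc
          · simpa only [Equiv.Perm.mul_apply] using hinv
        · exact t_invol a
        · exact t_invol b
    · intro hab
      rcases hab with ⟨h1, h2⟩ | ⟨x, y, hxy, hxa, hyb⟩
      · subst h1; subst h2; exact hmem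
      · subst hxa; subst hyb
        rw [mem_invSet] at hxy ⊢
        obtain ⟨⟨hxP, hyP⟩, hlt, hinv⟩ := hxy
        have hne : ¬(x = -1 ∧ y = 1) := by
          rintro ⟨rfl, rfl⟩
          rw [hw.1 1] at hinv
          omega
        refine ⟨⟨t_maps_PosSet hn hxP, t_maps_PosSet hn hyP⟩, ?_, ?_⟩
        · exact t_order (mem_PosSet.mp hxP).1 (mem_PosSet.mp hyP).1 hlt hne
        · simp only [Equiv.Perm.mul_apply, t_invol]
          exact hinv
  rw [himg]
  rw [Finset.card_insert_of_notMem, Finset.card_image_of_injective]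
  · exact fun p q hpq => by
      have h1 : t p.1 = t q.1 := congrArg Prod.fst hpq
      have h2 : t p.2 = t q.2 := congrArg Prod.snd hpq
      exact Prod.ext (t.injective h1) (t.injective h2)
  · intro hcon
    rw [Finset.mem_image] at hcon
    obtain ⟨p, hp, hpe⟩ := hcon
    have h1 : t p.1 = -1 := congrArg Prod.fst hpe
    have h2 : t p.2 = 1 := congrArg Prod.snd hpe
    have e1 : p.1 = 1 := t.injective (by rw [h1, ht1])
    have e2 : p.2 = -1 := t.injective (by rw [h2, htm1])
    obtain ⟨p1, p2⟩ := p
    rw [mem_invSet] at hp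
    simp only at e1 e2
    omega


lemma invS_card {n : ℕ} {w : Equiv.Perm ℤ} {i : ℤ} (hi : 1 ≤ i) (hin : i + 1 ≤ (n:ℤ))
    (hw : w ∈ W n) (ha : w i < w (i + 1)) :
    (invSet n (w * s i)).card = (invSet n w).card + 2 := by
  have hsi : s i i = i + 1 := by rw [s_apply hi]; split_ifs <;> omega
  have hsi1 : s i (i + 1) = i := by rw [s_apply hi]; split_ifs <;> omega
  have hsmi : s i (-i) = -(i+1) := by rw [s_apply hi]; split_ifs <;> omega
  have hsmi1 : s i (-(i+1)) = -i := by rw [s_apply hi]; split_ifs <;> omega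
  have hmem1 : ((i : ℤ), i + 1) ∈ invSet n (w * s i) := by
    rw [mem_invSet]
    refine ⟨⟨mem_PosSet.mpr (by omega), mem_PosSet.mpr (by omega)⟩, by omega, ?_⟩
    simp only [Equiv.Perm.mul_apply, hsi, hsi1]
    exact ha
  have hmem2 : ((-(i+1) : ℤ), -i) ∈ invSet n (w * s i) := by
    rw [mem_invSet]
    refine ⟨⟨mem_PosSet.mpr (by omega), mem_PosSet.mpr (by omega)⟩, by omega, ?_⟩
    simp only [Equiv.Perm.mul_apply, hsmi, hsmi1, hw.1 i, hw.1 (i+1)]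
    omega
  have himg : invSet n (w * s i) =
      insert ((i : ℤ), i + 1) (insert ((-(i+1) : ℤ), -i)
        ((invSet n w).image (fun p => (s i p.1, s i p.2)))) := by
    ext ⟨a, b⟩
    simp only [Finset.mem_insert, Finset.mem_image, Prod.mk.injEq, Prod.exists]
    constructor
    · intro hab
      rw [mem_invSet] at hab
      obtain ⟨⟨haP, hbP⟩, hlt, hinv⟩ := hab
      by_cases hc1 : a = i ∧ b = i + 1
      · exact Or.inl ⟨hc1.1, hc1.2⟩
      by_cases hc2 : a = -(i+1) ∧ b = -i
      · exact Or.inr (Or.inl ⟨hc2.1, hc2.2⟩)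
      right; right
      refine ⟨s i a, s i b, ?_, s_invol hi a, s_invol hi b⟩
      rw [mem_invSet]
      refine ⟨⟨s_maps_PosSet hi hin haP, s_maps_PosSet hi hin hbP⟩, ?_, ?_⟩
      · exact s_order hi hlt hc1 hc2
      · simpa only [Equiv.Perm.mul_apply] using hinv
    · intro hab
      rcases hab with ⟨h1, h2⟩ | ⟨h1, h2⟩ | ⟨x, y, hxy, hxa, hyb⟩
      · subst h1; subst h2; exact hmem1
      · subst h1; subst h2; exact hmem2
      · subst hxa; subst hyb
        rw [mem_invSet] at hxy ⊢
        obtain ⟨⟨hxP, hyP⟩, hlt, hinv⟩ := hxy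
        have hne1 : ¬(x = i ∧ y = i + 1) := by rintro ⟨rfl, rfl⟩; omega
        have hne2 : ¬(x = -(i+1) ∧ y = -i) := by
          rintro ⟨rfl, rfl⟩
          rw [hw.1 i, hw.1 (i+1)] at hinv
          omega
        refine ⟨⟨s_maps_PosSet hi hin hxP, s_maps_PosSet hi hin hyP⟩, ?_, ?_⟩
        · exact s_order hi hlt hne1 hne2
        · simp only [Equiv.Perm.mul_apply, s_invol hi]
          exact hinv
  have hinj : Function.Injective (fun p : ℤ × ℤ => (s i p.1, s i p.2)) := by
    intro p q hpq
    have h1 : s i p.1 = s i q.1 := congrArg Prod.fst hpq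
    have h2 : s i p.2 = s i q.2 := congrArg Prod.snd hpq
    exact Prod.ext ((s i).injective h1) ((s i).injective h2)
  have hnm2 : ((-(i+1) : ℤ), -i) ∉ (invSet n w).image (fun p => (s i p.1, s i p.2)) := by
    intro hcon
    rw [Finset.mem_image] at hcon
    obtain ⟨⟨p1, p2⟩, hp, hpe⟩ := hcon
    have h1 : s i p1 = -(i+1) := congrArg Prod.fst hpe
    have h2 : s i p2 = -i := congrArg Prod.snd hpe
    have e1 : p1 = -i := (s i).injective (by rw [h1, hsmi])
    have e2 : p2 = -(i+1) := (s i).injective (by rw [h2, hsmi1])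
    rw [mem_invSet] at hp
    omega
  have hnm1 : ((i : ℤ), i + 1) ∉ insert ((-(i+1) : ℤ), -i)
      ((invSet n w).image (fun p => (s i p.1, s i p.2))) := by
    rw [Finset.mem_insert]
    rintro (h | hcon)
    · have := congrArg Prod.fst h
      simp only at this
      omega
    · rw [Finset.mem_image] at hcon
      obtain ⟨⟨p1, p2⟩, hp, hpe⟩ := hcon
      have h1 : s i p1 = i := congrArg Prod.fst hpe
      have h2 : s i p2 = i + 1 := congrArg Prod.snd hpe
      have e1 : p1 = i + 1 := (s i).injective (by rw [h1, hsi1])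
      have e2 : p2 = i := (s i).injective (by rw [h2, hsi])
      rw [mem_invSet] at hp
      omega
  rw [himg, Finset.card_insert_of_notMem hnm1, Finset.card_insert_of_notMem hnm2,
    Finset.card_image_of_injective _ hinj]

lemma negT_card {n : ℕ} {w : Equiv.Perm ℤ} (hn : 1 ≤ n) (hw : w ∈ W n) (ha : 0 < w 1) :
    Neg n (w * t) = Neg n w + 1 := by
  have hset : (Finset.Icc (1:ℤ) n).filter (fun j => (w * t) j < 0) =
      insert 1 ((Finset.Icc (1:ℤ) n).filter (fun j => w j < 0)) := by
    ext j
    simp only [Finset.mem_filter, Finset.mem_insert, Finset.mem_Icc]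
    constructor
    · rintro ⟨hj, hneg⟩
      by_cases h1 : j = 1
      · exact Or.inl h1
      · right
        rw [mulT_other h1 (by omega)] at hneg
        exact ⟨hj, hneg⟩
    · rintro (rfl | ⟨hj, hneg⟩)
      · refine ⟨by omega, ?_⟩
        rw [mulT_one hw]
        omega
      · by_cases h1 : j = 1
        · subst h1; omega
        · rw [mulT_other h1 (by omega)]
          exact ⟨hj, hneg⟩
  rw [Neg, Neg, hset, Finset.card_insert_of_notMem]
  simp only [Finset.mem_filter]
  rintro ⟨-, h⟩
  omega

lemma negS_card {n : ℕ} {w : Equiv.Perm ℤ} {i : ℤ} (hi : 1 ≤ i) (hin : i + 1 ≤ (n:ℤ)) :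
    Neg n (w * s i) = Neg n w := by
  refine Finset.card_bij' (fun j _ => s i j) (fun j _ => s i j) ?_ ?_ ?_ ?_
  · intro j hj
    rw [Finset.mem_filter, Finset.mem_Icc] at hj ⊢
    refine ⟨?_, ?_⟩
    · rw [s_apply hi]; split_ifs <;> omega
    · have := hj.2
      rw [Equiv.Perm.mul_apply] at this
      exact this
  · intro j hj
    rw [Finset.mem_filter, Finset.mem_Icc] at hj ⊢
    refine ⟨?_, ?_⟩
    · rw [s_apply hi]; split_ifs <;> omega
    · rw [Equiv.Perm.mul_apply, s_invol hi]
      exact hj.2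
  · intro j hj
    exact s_invol hi j
  · intro j hj
    exact s_invol hi j


lemma DD_t_incr {n : ℕ} {w : Equiv.Perm ℤ} (hn : 1 ≤ n) (hw : w ∈ W n) (ha : 0 < w 1) :
    DD n (w * t) = DD n w + 2 := by
  rw [DD, DD, invT_card hn hw ha, negT_card hn hw ha]
  omega

lemma DD_t_decr {n : ℕ} {w : Equiv.Perm ℤ} (hn : 1 ≤ n) (hw : w ∈ W n) (ha : w 1 < 0) :
    DD n w = DD n (w * t) + 2 := by
  have hwt : w * t ∈ W n := W_mul hw (t_mem_W hn)
  have h1 : (w * t) 1 = -(w 1) := mulT_one hw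
  have := DD_t_incr hn hwt (by omega)
  rw [mul_assoc, t_t, mul_one] at this
  exact this

lemma DD_s_incr {n : ℕ} {w : Equiv.Perm ℤ} {i : ℤ} (hi : 1 ≤ i) (hin : i + 1 ≤ (n:ℤ))
    (hw : w ∈ W n) (ha : w i < w (i + 1)) : DD n (w * s i) = DD n w + 2 := by
  rw [DD, DD, invS_card hi hin hw ha, negS_card hi hin]
  omega

lemma DD_s_decr {n : ℕ} {w : Equiv.Perm ℤ} {i : ℤ} (hi : 1 ≤ i) (hin : i + 1 ≤ (n:ℤ))
    (hw : w ∈ W n) (ha : w (i + 1) < w i) : DD n w = DD n (w * s i) + 2 := by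
  have hws : w * s i ∈ W n := W_mul hw (s_mem_W hi hin)
  have h1 : (w * s i) i = w (i + 1) := mulS_fst hi
  have h2 : (w * s i) (i + 1) = w i := mulS_snd hi
  have := DD_s_incr hi hin hws (by omega)
  rw [mul_assoc, s_s hi, mul_one] at this
  exact this

lemma DD_one (n : ℕ) : DD n 1 = 0 := by
  rw [DD, Neg]
  have h1 : invSet n 1 = ∅ := by
    ext ⟨a, b⟩
    rw [mem_invSet]
    simp only [Equiv.Perm.one_apply, Finset.notMem_empty, iff_false]
    rintro ⟨-, h1, h2⟩
    omega
  have h2 : (Finset.Icc (1:ℤ) n).filter (fun i => (1 : Equiv.Perm ℤ) i < 0) = ∅ := by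
    ext j
    simp only [Finset.mem_filter, Finset.mem_Icc, Equiv.Perm.one_apply,
      Finset.notMem_empty, iff_false]
    intro hj
    have h3 := Finset.mem_filter.mp hj
    have h4 := Finset.mem_Icc.mp h3.1
    have h5 : j < 0 := h3.2
    omega
  rw [h1, h2]
  simp

lemma dichotomy {n : ℕ} {u g : Equiv.Perm ℤ} (hn : 1 ≤ n) (hu : u ∈ W n) (hg : g ∈ gens n) :
    DD n (u * g) = DD n u + 2 ∨ DD n u = DD n (u * g) + 2 := by
  rcases hg with rfl | ⟨i, hi1, hi2, rfl⟩
  · have h1 : u 1 ≠ 0 := W_ne_zero hu (by omega)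
    rcases lt_or_gt_of_ne h1 with h | h
    · exact Or.inr (DD_t_decr hn hu h)
    · exact Or.inl (DD_t_incr hn hu h)
  · have hi : (1 : ℤ) ≤ (i : ℤ) := by exact_mod_cast hi1
    have hin : (i : ℤ) + 1 ≤ (n : ℤ) := by
      have : i + 1 ≤ n := by omega
      exact_mod_cast this
    have hne : u (i : ℤ) ≠ u ((i : ℤ) + 1) := fun h => by
      have := u.injective h; omega
    rcases lt_or_gt_of_ne hne with h | h
    · exact Or.inl (DD_s_incr hi hin hu h)
    · exact Or.inr (DD_s_decr hi hin hu h)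

-- words and length
lemma word_D {n : ℕ} (hn : 1 ≤ n) :
    ∀ l : List (Equiv.Perm ℤ), (∀ g ∈ l, g ∈ gens n) →
      l.prod ∈ W n ∧ DD n l.prod ≤ 2 * l.length := by
  intro l
  induction l using List.reverseRecOn with
  | nil => intro _; simpa using ⟨one_mem_W n, by rw [DD_one]⟩
  | append_singleton l g ih =>
    intro hmem
    have hl : ∀ x ∈ l, x ∈ gens n := fun x hx => hmem x (by simp [hx])
    have hg : g ∈ gens n := hmem g (by simp)
    obtain ⟨hW, hD⟩ := ih hl
    rw [List.prod_append, List.prod_cons, List.prod_nil, mul_one]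
    refine ⟨W_mul hW (gen_mem_W hn hg), ?_⟩
    rcases dichotomy hn hW hg with h | h <;> simp [List.length_append] <;> omega

-- identity characterization / descent existence
lemma exists_desc {n : ℕ} (hn : 1 ≤ n) {w : Equiv.Perm ℤ} (hw : w ∈ W n) (hne : w ≠ 1) :
    w 1 < 0 ∨ ∃ i : ℤ, 1 ≤ i ∧ i + 1 ≤ (n:ℤ) ∧ w (i + 1) < w i := by
  by_contra hcon
  push_neg at hcon
  obtain ⟨h1, h2⟩ := hcon
  -- all adjacent pairs increasing, w 1 > 0
  have h1' : 0 < w 1 := lt_of_le_of_ne h1 (Ne.symm (W_ne_zero hw (by omega)))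
  have hadj : ∀ i : ℤ, 1 ≤ i → i + 1 ≤ (n:ℤ) → w i < w (i + 1) := by
    intro i hi hin
    have hne2 : w i ≠ w (i + 1) := fun h => by have := w.injective h; omega
    have := h2 i hi hin
    omega
  -- lower bounds
  have hlow : ∀ m : ℕ, ((m:ℤ) + 1) ≤ (n:ℤ) → (m:ℤ) + 1 ≤ w ((m:ℤ) + 1) := by
    intro m
    induction m with
    | zero => intro _; simpa using (show (1:ℤ) ≤ w 1 by omega)
    | succ k ihk =>
      intro hk
      push_cast at hk ⊢
      have hk' : (k:ℤ) + 1 ≤ (n:ℤ) := by omega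
      have := ihk hk'
      have := hadj ((k:ℤ) + 1) (by omega) (by push_cast; omega)
      omega
  have hhigh : ∀ m : ℕ, 1 ≤ (n:ℤ) - m → w ((n:ℤ) - m) ≤ (n:ℤ) - m := by
    intro m
    induction m with
    | zero =>
      intro _
      simp only [Nat.cast_zero, sub_zero]
      have := W_window hw (i := (n:ℤ)) (by rw [abs_le]; omega)
      rw [abs_le] at this
      omega
    | succ k ihk =>
      intro hk
      push_cast at hk ⊢
      have e2 : (n:ℤ) - ((k:ℤ)+1) = (n:ℤ) - k - 1 := by ring
      rw [e2]
      have hadj2 := hadj ((n:ℤ) - k - 1) (by omega) (by omega)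
      have e3 : (n:ℤ) - k - 1 + 1 = (n:ℤ) - k := by ring
      rw [e3] at hadj2
      have := ihk (by omega)
      omega
  -- w = 1
  apply hne
  ext j
  simp only [Equiv.Perm.one_apply]
  rcases lt_trichotomy j 0 with hj | hj | hj
  · by_cases hjn : -(n:ℤ) ≤ j
    · have hfix : w (-j) = -j := by
        have e1 : (-j) = ((-j - 1).toNat : ℤ) + 1 := by omega
        have e2 : (-j) = (n:ℤ) - ((n:ℤ) + j).toNat := by omega
        have l1 := hlow (-j - 1).toNat (by omega)
        have l2 := hhigh ((n:ℤ) + j).toNat (by omega)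
        rw [← e1] at l1
        rw [← e2] at l2
        omega
      have := hw.1 (-j)
      rw [hfix] at this
      simpa using this
    · exact hw.2 j (by rw [lt_abs]; omega)
  · subst hj; exact W_zero n hw
  · by_cases hjn : j ≤ (n:ℤ)
    · have e1 : j = ((j - 1).toNat : ℤ) + 1 := by omega
      have e2 : j = (n:ℤ) - ((n:ℤ) - j).toNat := by omega
      have l1 := hlow (j - 1).toNat (by omega)
      have l2 := hhigh ((n:ℤ) - j).toNat (by omega)
      rw [← e1] at l1
      rw [← e2] at l2
      omega
    · exact hw.2 j (by rw [lt_abs]; omega)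


lemma t_mem_gens (n : ℕ) : t ∈ gens n := Or.inl rfl

lemma s_mem_gens {n : ℕ} {i : ℕ} (hi1 : 1 ≤ i) (hi2 : i ≤ n - 1) : s (i : ℤ) ∈ gens n :=
  Or.inr ⟨i, hi1, hi2, rfl⟩

lemma exists_word {n : ℕ} (hn : 1 ≤ n) {w : Equiv.Perm ℤ} (hw : w ∈ W n) :
    ∃ l : List (Equiv.Perm ℤ), (∀ g ∈ l, g ∈ gens n) ∧ l.prod = w ∧
      2 * l.length = DD n w := by
  suffices H : ∀ k : ℕ, ∀ w : Equiv.Perm ℤ, w ∈ W n → DD n w = k →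
      ∃ l : List (Equiv.Perm ℤ), (∀ g ∈ l, g ∈ gens n) ∧ l.prod = w ∧
        2 * l.length = DD n w by
    exact H (DD n w) w hw rfl
  intro k
  induction k using Nat.strong_induction_on with
  | _ k ih =>
    intro w hw hk
    by_cases hone : w = 1
    · subst hone
      exact ⟨[], by simp, by simp, by rw [DD_one]; simp⟩
    rcases exists_desc hn hw hone with h | ⟨i, hi, hin, h⟩
    · -- t descent
      have hdec : DD n w = DD n (w * t) + 2 := DD_t_decr hn hw h
      have hwt : w * t ∈ W n := W_mul hw (t_mem_W hn)
      obtain ⟨l, hl1, hl2, hl3⟩ := ih (DD n (w * t)) (by omega) (w * t) hwt rfl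
      refine ⟨l ++ [t], ?_, ?_, ?_⟩
      · intro g hg
        rcases List.mem_append.mp hg with hg | hg
        · exact hl1 g hg
        · simp at hg; subst hg; exact t_mem_gens n
      · rw [List.prod_append, List.prod_cons, List.prod_nil, mul_one, hl2,
          mul_assoc, t_t, mul_one]
      · simp only [List.length_append, List.length_cons, List.length_nil]
        omega
    · -- s descent
      have hdec : DD n w = DD n (w * s i) + 2 := DD_s_decr hi hin hw h
      have hws : w * s i ∈ W n := W_mul hw (s_mem_W hi hin)
      obtain ⟨l, hl1, hl2, hl3⟩ := ih (DD n (w * s i)) (by omega) (w * s i) hws rfl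
      refine ⟨l ++ [s i], ?_, ?_, ?_⟩
      · intro g hg
        rcases List.mem_append.mp hg with hg | hg
        · exact hl1 g hg
        · simp at hg; subst hg
          have : i = ((i.toNat : ℕ) : ℤ) := by omega
          rw [this]
          exact s_mem_gens (by omega) (by omega)
      · rw [List.prod_append, List.prod_cons, List.prod_nil, mul_one, hl2,
          mul_assoc, s_s hi, mul_one]
      · simp only [List.length_append, List.length_cons, List.length_nil]
        omega

lemma two_mul_len {n : ℕ} (hn : 1 ≤ n) {w : Equiv.Perm ℤ} (hw : w ∈ W n) :
    2 * len n w = DD n w := by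
  obtain ⟨l, hl1, hl2, hl3⟩ := exists_word hn hw
  have hne : l.length ∈ {k | ∃ l' : List (Equiv.Perm ℤ), l'.length = k ∧
      (∀ g ∈ l', g ∈ gens n) ∧ l'.prod = w} := ⟨l, rfl, hl1, hl2⟩
  have hmem := Nat.sInf_mem (Set.nonempty_of_mem hne)
  obtain ⟨l0, hl0len, hl0g, hl0p⟩ := hmem
  have hD := (word_D hn l0 hl0g).2
  rw [hl0p] at hD
  have hub : len n w ≤ l.length := Nat.sInf_le hne
  have hlen : len n w = l0.length := by rw [len]; exact hl0len.symm
  omega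

-- descent criteria
lemma len_t_lt {n : ℕ} (hn : 1 ≤ n) {w : Equiv.Perm ℤ} (hw : w ∈ W n) :
    len n (w * t) < len n w ↔ w 1 < 0 := by
  have hwt : w * t ∈ W n := W_mul hw (t_mem_W hn)
  have e1 := two_mul_len hn hw
  have e2 := two_mul_len hn hwt
  have h0 : w 1 ≠ 0 := W_ne_zero hw (by omega)
  rcases lt_or_gt_of_ne h0 with h | h
  · have := DD_t_decr hn hw h
    constructor
    · intro _; exact h
    · intro _; omega
  · have := DD_t_incr hn hw h
    constructor
    · intro hc; omega
    · intro hc; omega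

lemma len_t_gt {n : ℕ} (hn : 1 ≤ n) {w : Equiv.Perm ℤ} (hw : w ∈ W n) :
    len n w < len n (w * t) ↔ 0 < w 1 := by
  have hwt : w * t ∈ W n := W_mul hw (t_mem_W hn)
  have e1 := two_mul_len hn hw
  have e2 := two_mul_len hn hwt
  have h0 : w 1 ≠ 0 := W_ne_zero hw (by omega)
  rcases lt_or_gt_of_ne h0 with h | h
  · have := DD_t_decr hn hw h
    exact ⟨fun hc => by omega, fun hc => by omega⟩
  · have := DD_t_incr hn hw h
    exact ⟨fun _ => h, fun _ => by omega⟩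

lemma len_s_lt {n : ℕ} {i : ℤ} (hi : 1 ≤ i) (hin : i + 1 ≤ (n:ℤ)) {w : Equiv.Perm ℤ}
    (hw : w ∈ W n) : len n (w * s i) < len n w ↔ w (i + 1) < w i := by
  have hn : 1 ≤ n := by omega
  have hws : w * s i ∈ W n := W_mul hw (s_mem_W hi hin)
  have e1 := two_mul_len hn hw
  have e2 := two_mul_len hn hws
  have h0 : w i ≠ w (i + 1) := fun h => by have := w.injective h; omega
  rcases lt_or_gt_of_ne h0 with h | h
  · have := DD_s_incr hi hin hw h
    exact ⟨fun hc => by omega, fun hc => by omega⟩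
  · have := DD_s_decr hi hin hw h
    exact ⟨fun _ => h, fun _ => by omega⟩

lemma len_s_gt {n : ℕ} {i : ℤ} (hi : 1 ≤ i) (hin : i + 1 ≤ (n:ℤ)) {w : Equiv.Perm ℤ}
    (hw : w ∈ W n) : len n w < len n (w * s i) ↔ w i < w (i + 1) := by
  have hn : 1 ≤ n := by omega
  have hws : w * s i ∈ W n := W_mul hw (s_mem_W hi hin)
  have e1 := two_mul_len hn hw
  have e2 := two_mul_len hn hws
  have h0 : w i ≠ w (i + 1) := fun h => by have := w.injective h; omega
  rcases lt_or_gt_of_ne h0 with h | h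
  · have := DD_s_incr hi hin hw h
    exact ⟨fun _ => h, fun _ => by omega⟩
  · have := DD_s_decr hi hin hw h
    exact ⟨fun hc => by omega, fun hc => by omega⟩


lemma gens_cases {n : ℕ} {g : Equiv.Perm ℤ} (hg : g ∈ gens n) :
    g = t ∨ ∃ i : ℤ, 1 ≤ i ∧ i + 1 ≤ (n:ℤ) ∧ g = s i := by
  rcases hg with h | ⟨i, hi1, hi2, rfl⟩
  · exact Or.inl h
  · right
    exact ⟨(i : ℤ), by exact_mod_cast hi1, by
      have : i + 1 ≤ n := by omega
      exact_mod_cast this, rfl⟩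

lemma des_t {n : ℕ} (hn : 1 ≤ n) {w : Equiv.Perm ℤ} (hw : w ∈ W n) :
    t ∈ Des n w ↔ w 1 < 0 := by
  rw [Des, Set.mem_setOf_eq]
  constructor
  · intro h
    exact (len_t_lt hn hw).mp h.2
  · intro h
    exact ⟨t_mem_gens n, (len_t_lt hn hw).mpr h⟩

lemma des_s' {n : ℕ} {i : ℤ} (hi : 1 ≤ i) (hin : i + 1 ≤ (n:ℤ)) {w : Equiv.Perm ℤ}
    (hw : w ∈ W n) : s i ∈ Des n w ↔ w (i + 1) < w i := by
  rw [Des, Set.mem_setOf_eq]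
  constructor
  · intro h
    exact (len_s_lt hi hin hw).mp h.2
  · intro h
    refine ⟨?_, (len_s_lt hi hin hw).mpr h⟩
    have he : i = ((i.toNat : ℕ) : ℤ) := by omega
    rw [he]
    exact s_mem_gens (by omega) (by omega)

-- basic sign facts for Area elements
lemma area_ne_zero {n : ℕ} {w : Equiv.Perm ℤ} (hw : w ∈ W n) {j : ℤ} (hj : j ≠ 0) :
    w j ≠ 0 := W_ne_zero hw hj

lemma factsA {n : ℕ} {w : Equiv.Perm ℤ} (hw : w ∈ Area n) {i : ℤ} (hi : 1 ≤ i)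
    (hin : i + 1 ≤ (n:ℤ)) (hab : w i < w (i + 1)) (h' : w * s i ∈ Area n) :
    0 < w (i + 1) ∧ w i < 0 := by
  have hb0 : w (i + 1) ≠ 0 := W_ne_zero hw.1 (by omega)
  have ha0 : w i ≠ 0 := W_ne_zero hw.1 (by omega)
  have hb : 0 < w (i + 1) := by
    rcases lt_or_gt_of_ne hb0 with h | h
    · exfalso
      have h1 := (h'.2 i (i + 1) hi (by omega) hin).1
      rw [mulS_fst hi, mulS_snd hi] at h1
      have := h1 h (by omega)
      omega
    · exact h
  refine ⟨hb, ?_⟩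
  rcases lt_or_gt_of_ne ha0 with h | h
  · exact h
  · exfalso
    have h1 := (hw.2 i (i + 1) hi (by omega) hin).2 h hb
    omega

lemma factsB {n : ℕ} {w : Equiv.Perm ℤ} (hw : w ∈ Area n) {i : ℤ} (hi : 1 ≤ i)
    (hin2 : i + 2 ≤ (n:ℤ)) (hab : w i < w (i + 1)) (hb : 0 < w (i + 1)) (ha : w i < 0) :
    w (i + 2) < w (i + 1) ∧ w i < w (i + 2) := by
  have hc0 : w (i + 2) ≠ 0 := W_ne_zero hw.1 (by omega)
  constructor
  · rcases lt_or_gt_of_ne hc0 with h | h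
    · omega
    · exact (hw.2 (i + 1) (i + 2) (by omega) (by omega) hin2).2 hb h
  · rcases lt_or_gt_of_ne hc0 with h | h
    · exact (hw.2 i (i + 2) hi (by omega) hin2).1 ha h
    · omega

lemma factD {n : ℕ} {w : Equiv.Perm ℤ} (hw : w ∈ Area n) {i : ℤ} (hi2 : 2 ≤ i)
    (hin : i + 1 ≤ (n:ℤ)) (hab : w i < w (i + 1)) (hb : 0 < w (i + 1))
    (h' : w * s i ∈ Area n) :
    w (i + 1) < w (i - 1) ↔ w i < w (i - 1) := by
  have hd0 : w (i - 1) ≠ 0 := W_ne_zero hw.1 (by omega)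
  constructor
  · intro h; omega
  · intro h
    by_contra hcon
    push_neg at hcon
    have hdb : w (i - 1) ≠ w (i + 1) := fun hh => by have := w.injective hh; omega
    rcases lt_or_gt_of_ne hd0 with hd | hd
    · -- d < 0, a < d < 0
      have h1 := (hw.2 (i - 1) i (by omega) (by omega) (by omega)).1 hd (by omega)
      omega
    · -- d > 0 : use h' on positions i-1, i
      have h1 := (h'.2 (i - 1) i (by omega) (by omega) (by omega)).2
      have e1 : (w * s i) (i - 1) = w (i - 1) := by
        apply mulS_other (by omega) <;> omega
      have e2 : (w * s i) i = w (i + 1) := mulS_fst (by omega)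
      rw [e1, e2] at h1
      have := h1 hd hb
      omega


lemma part1 {n : ℕ} (hn : 3 ≤ n) {w : Equiv.Perm ℤ} (hw : w ∈ Area n)
    (hl : len n w < len n (w * t)) (h' : w * t ∈ Area n) :
    s 1 ∈ Des n w ∧ Des n (w * t) = (Des n w ∪ {t}) \ {s 1} := by
  have hn1 : 1 ≤ n := by omega
  have hW := hw.1
  have hWt : w * t ∈ W n := h'.1
  have ha : 0 < w 1 := (len_t_gt hn1 hW).mp hl
  have hb0 : w 2 ≠ 0 := W_ne_zero hW (by omega)
  have hba : w 2 < w 1 := by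
    rcases lt_or_gt_of_ne hb0 with h | h
    · omega
    · exact (hw.2 1 2 le_rfl one_lt_two (by omega)).2 ha h
  have hwt1 : (w * t) 1 = -(w 1) := mulT_one hW
  have hs1 : s 1 ∈ Des n w := by
    rw [des_s' le_rfl (by omega) hW]
    norm_num
    exact hba
  refine ⟨hs1, ?_⟩
  ext g
  simp only [Set.mem_diff, Set.mem_union, Set.mem_singleton_iff]
  constructor
  · intro hg
    rcases gens_cases hg.1 with rfl | ⟨j, hj1, hjn, rfl⟩
    · exact ⟨Or.inr rfl, t_ne_s le_rfl⟩
    · have hgd := (des_s' hj1 hjn hWt).mp hg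
      by_cases hj : j = 1
      · exfalso
        subst hj
        have e2 : (w * t) (1 + 1) = w 2 := by rw [mulT_other (by omega) (by omega)]; norm_num
        rw [e2, hwt1] at hgd
        have h1 := (h'.2 1 2 le_rfl one_lt_two (by omega)).1
        have e3 : (w * t) 2 = w 2 := mulT_other (by omega) (by omega)
        rw [hwt1, e3] at h1
        have := h1 (by omega) (by omega)
        omega
      · have hj2 : 2 ≤ j := by omega
        have e1 : (w * t) j = w j := mulT_other (by omega) (by omega)
        have e2 : (w * t) (j + 1) = w (j + 1) := mulT_other (by omega) (by omega)
        rw [e1, e2] at hgd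
        exact ⟨Or.inl ((des_s' hj1 hjn hW).mpr hgd), s_ne_s hj1 le_rfl hj⟩
  · rintro ⟨hg | rfl, hgne⟩
    · rcases gens_cases hg.1 with rfl | ⟨j, hj1, hjn, rfl⟩
      · exfalso
        have := (des_t hn1 hW).mp hg
        omega
      · have hj : j ≠ 1 := fun h => hgne (by rw [h])
        have hj2 : 2 ≤ j := by omega
        have hgd := (des_s' hj1 hjn hW).mp hg
        have e1 : (w * t) j = w j := mulT_other (by omega) (by omega)
        have e2 : (w * t) (j + 1) = w (j + 1) := mulT_other (by omega) (by omega)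
        rw [des_s' hj1 hjn hWt, e1, e2]
        exact hgd
    · rw [des_t hn1 hWt, hwt1]
      omega


lemma part2 {n : ℕ} {w : Equiv.Perm ℤ} (hw : w ∈ Area n) {i : ℤ} (hi : 1 ≤ i)
    (hin2 : i + 2 ≤ (n:ℤ)) (hl : len n w < len n (w * s i)) (h' : w * s i ∈ Area n) :
    s (i + 1) ∈ Des n w := by
  have hW := hw.1
  have hab : w i < w (i + 1) := (len_s_gt hi (by omega) hW).mp hl
  obtain ⟨hb, ha⟩ := factsA hw hi (by omega) hab h'
  obtain ⟨hcb, hac⟩ := factsB hw hi hin2 hab hb ha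
  rw [des_s' (by omega) (by omega) hW]
  have e : i + 1 + 1 = i + 2 := by ring
  rw [e]
  exact hcb

lemma des_transfer {n : ℕ} {w : Equiv.Perm ℤ} (hW : w ∈ W n) {i j : ℤ} (hi : 1 ≤ i)
    (hin : i + 1 ≤ (n:ℤ)) (hj1 : 1 ≤ j) (hjn : j + 1 ≤ (n:ℤ)) (h1 : j + 1 < i ∨ i + 1 < j) :
    (s j ∈ Des n (w * s i) ↔ s j ∈ Des n w) := by
  have hWs : w * s i ∈ W n := W_mul hW (s_mem_W hi hin)
  rcases h1 with h1 | h1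
  · have e1 : (w * s i) j = w j := by apply mulS_other hi <;> omega
    have e2 : (w * s i) (j + 1) = w (j + 1) := by apply mulS_other hi <;> omega
    rw [des_s' hj1 hjn hWs, des_s' hj1 hjn hW, e1, e2]
  · have e1 : (w * s i) j = w j := by apply mulS_other hi <;> omega
    have e2 : (w * s i) (j + 1) = w (j + 1) := by apply mulS_other hi <;> omega
    rw [des_s' hj1 hjn hWs, des_s' hj1 hjn hW, e1, e2]

lemma des_t_transfer {n : ℕ} {w : Equiv.Perm ℤ} (hn1 : 1 ≤ n) (hW : w ∈ W n) {i : ℤ}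
    (hi2 : 2 ≤ i) (hin : i + 1 ≤ (n:ℤ)) :
    (t ∈ Des n (w * s i) ↔ t ∈ Des n w) := by
  have hWs : w * s i ∈ W n := W_mul hW (s_mem_W (by omega) hin)
  have e1 : (w * s i) 1 = w 1 := by apply mulS_other (by omega) <;> omega
  rw [des_t hn1 hWs, des_t hn1 hW, e1]

lemma des_prev_transfer {n : ℕ} {w : Equiv.Perm ℤ} (hw : w ∈ Area n) {i : ℤ}
    (hi2 : 2 ≤ i) (hin : i + 1 ≤ (n:ℤ)) (hab : w i < w (i + 1)) (hb : 0 < w (i + 1))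
    (h' : w * s i ∈ Area n) :
    (s (i - 1) ∈ Des n (w * s i) ↔ s (i - 1) ∈ Des n w) := by
  have hW := hw.1
  have hWs : w * s i ∈ W n := h'.1
  have e0 : i - 1 + 1 = i := by ring
  have e1 : (w * s i) (i - 1) = w (i - 1) := by apply mulS_other (by omega) <;> omega
  have e2 : (w * s i) i = w (i + 1) := mulS_fst (by omega)
  rw [des_s' (by omega) (by omega) hWs, des_s' (by omega) (by omega) hW, e0, e1, e2]
  exact factD hw hi2 hin hab hb h'

lemma part3 {n : ℕ} (hn : 3 ≤ n) {w : Equiv.Perm ℤ} (hw : w ∈ Area n)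
    (hl : len n w < len n (w * s 1)) (h' : w * s 1 ∈ Area n) :
    Des n (w * s 1) = (Des n w ∪ {s 1}) \ {t, s 2} := by
  have hn1 : 1 ≤ n := by omega
  have hW := hw.1
  have hWs : w * s 1 ∈ W n := h'.1
  have e12 : (1:ℤ) + 1 = 2 := by norm_num
  have e13 : (1:ℤ) + 2 = 3 := by norm_num
  have e23 : (2:ℤ) + 1 = 3 := by norm_num
  have hab : w 1 < w 2 := by
    have h := (len_s_gt le_rfl (by omega) hW).mp hl
    rwa [e12] at h
  have hfa := factsA hw le_rfl (by omega) (by rwa [e12]) h'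
  rw [e12] at hfa
  obtain ⟨hb, ha⟩ := hfa
  have hfb := factsB hw le_rfl (by omega) (by rwa [e12]) (by rwa [e12]) ha
  rw [e12, e13] at hfb
  obtain ⟨hcb, hac⟩ := hfb
  have ew1 : (w * s 1) 1 = w 2 := by rw [mulS_fst le_rfl, e12]
  have ew2 : (w * s 1) 2 = w 1 := by
    have h := mulS_snd (w := w) (i := 1) le_rfl
    rwa [e12] at h
  have ew3 : (w * s 1) 3 = w 3 := by apply mulS_other le_rfl <;> omega
  ext g
  simp only [Set.mem_diff, Set.mem_union, Set.mem_singleton_iff, Set.mem_insert_iff]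
  constructor
  · intro hg
    rcases gens_cases hg.1 with rfl | ⟨j, hj1, hjn, rfl⟩
    · exfalso
      have h := (des_t hn1 hWs).mp hg
      rw [ew1] at h
      omega
    · by_cases hj1' : j = 1
      · subst hj1'
        refine ⟨Or.inr rfl, ?_⟩
        rintro (h | h)
        · exact t_ne_s le_rfl h.symm
        · exact s_ne_s le_rfl (by omega) (by omega) h
      · by_cases hj2 : j = 2
        · exfalso
          subst hj2
          have hgd := (des_s' hj1 hjn hWs).mp hg
          rw [e23, ew2, ew3] at hgd
          omega
        · have hj3 : 3 ≤ j := by omega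
          have hgd := (des_transfer hW le_rfl (by omega) hj1 hjn (by omega)).mp hg
          refine ⟨Or.inl hgd, ?_⟩
          rintro (h | h)
          · exact t_ne_s hj1 h.symm
          · exact s_ne_s hj1 (by omega) (by omega) h
  · rintro ⟨hg | rfl, hgne⟩
    · rcases gens_cases hg.1 with rfl | ⟨j, hj1, hjn, rfl⟩
      · exact absurd (Or.inl rfl) hgne
      · by_cases hj1' : j = 1
        · subst hj1'
          rw [des_s' le_rfl (by omega) hWs, e12, ew1, ew2]
          exact hab
        · by_cases hj2 : j = 2
          · exact absurd (Or.inr (by rw [hj2])) hgne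
          · have hj3 : 3 ≤ j := by omega
            exact (des_transfer hW le_rfl (by omega) hj1 hjn (by omega)).mpr hg
    · rw [des_s' le_rfl (by omega) hWs, e12, ew1, ew2]
      exact hab


lemma part4 {n : ℕ} {w : Equiv.Perm ℤ} (hw : w ∈ Area n) {i : ℤ} (hi2 : 2 ≤ i)
    (hin2 : i + 2 ≤ (n:ℤ)) (hl : len n w < len n (w * s i)) (h' : w * s i ∈ Area n) :
    Des n (w * s i) = (Des n w ∪ {s i}) \ {s (i + 1)} := by
  have hn1 : 1 ≤ n := by omega
  have hW := hw.1
  have hWs : w * s i ∈ W n := h'.1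
  have hi1 : (1:ℤ) ≤ i := by omega
  have hab : w i < w (i + 1) := (len_s_gt hi1 (by omega) hW).mp hl
  obtain ⟨hb, ha⟩ := factsA hw hi1 (by omega) hab h'
  obtain ⟨hcb, hac⟩ := factsB hw hi1 hin2 hab hb ha
  have e0 : i + 1 + 1 = i + 2 := by ring
  have ewi : (w * s i) i = w (i + 1) := mulS_fst hi1
  have ewi1 : (w * s i) (i + 1) = w i := mulS_snd hi1
  have ewi2 : (w * s i) (i + 2) = w (i + 2) := by apply mulS_other hi1 <;> omega
  ext g
  simp only [Set.mem_diff, Set.mem_union, Set.mem_singleton_iff]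
  constructor
  · intro hg
    rcases gens_cases hg.1 with rfl | ⟨j, hj1, hjn, rfl⟩
    · exact ⟨Or.inl ((des_t_transfer hn1 hW hi2 (by omega)).mp hg), t_ne_s (by omega)⟩
    · by_cases hji : j = i
      · subst hji
        exact ⟨Or.inr rfl, s_ne_s hj1 (by omega) (by omega)⟩
      by_cases hji1 : j = i + 1
      · exfalso
        subst hji1
        have hgd := (des_s' hj1 hjn hWs).mp hg
        rw [e0, ewi2, ewi1] at hgd
        omega
      by_cases hjim : j = i - 1
      · subst hjim
        exact ⟨Or.inl ((des_prev_transfer hw hi2 (by omega) hab hb h').mp hg),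
          s_ne_s hj1 (by omega) (by omega)⟩
      · exact ⟨Or.inl ((des_transfer hW hi1 (by omega) hj1 hjn (by omega)).mp hg),
          s_ne_s hj1 (by omega) (by omega)⟩
  · rintro ⟨hg | rfl, hgne⟩
    · rcases gens_cases hg.1 with rfl | ⟨j, hj1, hjn, rfl⟩
      · exact (des_t_transfer hn1 hW hi2 (by omega)).mpr hg
      · by_cases hji : j = i
        · subst hji
          rw [des_s' hj1 hjn hWs, ewi, ewi1]
          exact hab
        by_cases hji1 : j = i + 1
        · exact absurd (by rw [hji1]) hgne
        by_cases hjim : j = i - 1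
        · subst hjim
          exact (des_prev_transfer hw hi2 (by omega) hab hb h').mpr hg
        · exact (des_transfer hW hi1 (by omega) hj1 hjn (by omega)).mpr hg
    · rw [des_s' hi1 (by omega) hWs, ewi, ewi1]
      exact hab

lemma part5 {n : ℕ} {w : Equiv.Perm ℤ} (hw : w ∈ Area n) {i : ℤ} (hi2 : 2 ≤ i)
    (hin : i + 1 = (n:ℤ)) (hl : len n w < len n (w * s i)) (h' : w * s i ∈ Area n) :
    Des n (w * s i) = Des n w ∪ {s i} := by
  have hn1 : 1 ≤ n := by omega
  have hW := hw.1
  have hWs : w * s i ∈ W n := h'.1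
  have hi1 : (1:ℤ) ≤ i := by omega
  have hab : w i < w (i + 1) := (len_s_gt hi1 (by omega) hW).mp hl
  obtain ⟨hb, ha⟩ := factsA hw hi1 (by omega) hab h'
  have ewi : (w * s i) i = w (i + 1) := mulS_fst hi1
  have ewi1 : (w * s i) (i + 1) = w i := mulS_snd hi1
  ext g
  simp only [Set.mem_union, Set.mem_singleton_iff]
  constructor
  · intro hg
    rcases gens_cases hg.1 with rfl | ⟨j, hj1, hjn, rfl⟩
    · exact Or.inl ((des_t_transfer hn1 hW hi2 (by omega)).mp hg)
    · by_cases hji : j = i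
      · subst hji
        exact Or.inr rfl
      by_cases hjim : j = i - 1
      · subst hjim
        exact Or.inl ((des_prev_transfer hw hi2 (by omega) hab hb h').mp hg)
      · exact Or.inl ((des_transfer hW hi1 (by omega) hj1 hjn (by omega)).mp hg)
  · intro hg
    rcases hg with hg | rfl
    · rcases gens_cases hg.1 with rfl | ⟨j, hj1, hjn, rfl⟩
      · exact (des_t_transfer hn1 hW hi2 (by omega)).mpr hg
      · by_cases hji : j = i
        · subst hji
          rw [des_s' hj1 hjn hWs, ewi, ewi1]
          exact hab
        by_cases hjim : j = i - 1
        · subst hjim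
          exact (des_prev_transfer hw hi2 (by omega) hab hb h').mpr hg
        · exact (des_transfer hW hi1 (by omega) hj1 hjn (by omega)).mpr hg
    · rw [des_s' hi1 (by omega) hWs, ewi, ewi1]
      exact hab


theorem statement5 (n : ℕ) (hn : 3 ≤ n) (w : Equiv.Perm ℤ) (hw : w ∈ Area n) :
    (len n w < len n (w * t) → w * t ∈ Area n →
        s 1 ∈ Des n w ∧ Des n (w * t) = (Des n w ∪ {t}) \ {s 1})
  ∧ (∀ i : ℕ, 1 ≤ i → i ≤ n - 2 → len n w < len n (w * s (i : ℤ)) →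
        w * s (i : ℤ) ∈ Area n → s ((i : ℤ) + 1) ∈ Des n w)
  ∧ (len n w < len n (w * s 1) → w * s 1 ∈ Area n →
        Des n (w * s 1) = (Des n w ∪ {s 1}) \ {t, s 2})
  ∧ (∀ i : ℕ, 2 ≤ i → i ≤ n - 2 → len n w < len n (w * s (i : ℤ)) →
        w * s (i : ℤ) ∈ Area n →
        Des n (w * s (i : ℤ)) = (Des n w ∪ {s (i : ℤ)}) \ {s ((i : ℤ) + 1)})
  ∧ (len n w < len n (w * s ((n : ℤ) - 1)) → w * s ((n : ℤ) - 1) ∈ Area n →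
        Des n (w * s ((n : ℤ) - 1)) = Des n w ∪ {s ((n : ℤ) - 1)}) := by
  have hW := hw.1
  refine ⟨fun hl h' => part1 hn hw hl h', fun i hi1 hi2 hl h' => part2 hw
    (by exact_mod_cast hi1) (by omega) hl h', fun hl h' => part3 hn hw hl h',
    fun i hi1 hi2 hl h' => part4 hw (by exact_mod_cast hi1) (by omega) hl h',
    fun hl h' => part5 hw (by omega) (by ring) hl h'⟩

end BnPaper
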